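/- Let w ∈ ℝ^n be such that T_w is a regular triangulation of A. Then for every w' ∈ ℝ^n the following are equivalent: (i) the set of facets of T_{w'} coincides with the set of facets of T_w; (ii) w'B_σ > 0 for every facet σ of T_w. Consequently, the set C(T_w) := {w' ∈ ℝ^n : the facets of T_{w'} equal the facets of T_w} is a nonempty open convex cone in ℝ^n (it contains w, is open, is closed under addition, and is closed under multiplication by positive real scalars). -/

import Mathlib

open Matrix

/-- `τ ∈ T_w`. -/
def memTw {d n : ℕ} (A : Matrix (Fin d) (Fin n) ℤ) (w : Fin n → ℝ)
    (τ : Finset (Fin n)) : Prop :=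
  ∃ c : Fin d → ℝ, (∀ j ∈ τ, (∑ i, c i * (A i j : ℝ)) = w j) ∧
    ∀ j ∉ τ, (∑ i, c i * (A i j : ℝ)) < w j

/-- The cone of nonnegative real combinations of the columns `a_j`, `j ∈ τ`. -/
def posCone {d n : ℕ} (A : Matrix (Fin d) (Fin n) ℤ) (τ : Finset (Fin n)) :
    Set (Fin d → ℝ) :=
  {x | ∃ lam : Fin n → ℝ, (∀ j, 0 ≤ lam j) ∧ x = fun i => ∑ j ∈ τ, lam j * (A i j : ℝ)}

/-- `τ` is a facet of `T_w`: `τ ∈ T_w` and `rank A_τ = d`, i.e. the columns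
indexed by `τ` span `ℝ^d`. -/
def isFacet {d n : ℕ} (A : Matrix (Fin d) (Fin n) ℤ) (w : Fin n → ℝ)
    (τ : Finset (Fin n)) : Prop :=
  memTw A w τ ∧
    Submodule.span ℝ (Set.range fun j : {j // j ∈ τ} => fun i => (A i j.1 : ℝ)) = ⊤

/-- `T_w` is a regular triangulation of `A`: every facet `σ` satisfies `|σ| = d`
and `det A_σ ≠ 0` (equivalently, its columns are linearly independent), and
`pos(A) = ⋃_{σ facet} pos(σ)`. -/
def isRegTriang {d n : ℕ} (A : Matrix (Fin d) (Fin n) ℤ) (w : Fin n → ℝ) : Prop :=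
  (∀ σ : Finset (Fin n), isFacet A w σ → σ.card = d ∧
      LinearIndependent ℝ (fun j : {j // j ∈ σ} => fun i => (A i j.1 : ℝ))) ∧
    posCone A Finset.univ = ⋃ σ ∈ {σ : Finset (Fin n) | isFacet A w σ}, posCone A σ

/-- `w' B_σ > 0`: for every `j ∉ σ`, writing `a_j = ∑_{k ∈ σ} g_k a_k`, one has
`w'_j - ∑_{k ∈ σ} g_k w'_k > 0`. -/
def wBpos {d n : ℕ} (A : Matrix (Fin d) (Fin n) ℤ) (w' : Fin n → ℝ)
    (σ : Finset (Fin n)) : Prop :=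
  ∀ j ∉ σ, ∀ g : Fin n → ℝ,
    (∀ i, (A i j : ℝ) = ∑ k ∈ σ, g k * (A i k : ℝ)) →
      0 < w' j - ∑ k ∈ σ, g k * w' k

/-- `C(T_w)`: the set of `w'` whose regular subdivision has the same facets as `T_w`. -/
def cTw {d n : ℕ} (A : Matrix (Fin d) (Fin n) ℤ) (w : Fin n → ℝ) : Set (Fin n → ℝ) :=
  {w' | ∀ τ : Finset (Fin n), isFacet A w' τ ↔ isFacet A w τ}

section auxx
variable {d n : ℕ}

lemma aux1_swap (c : Fin d → ℝ) (σ : Finset (Fin n)) (μ : Fin n → ℝ) (f : Fin n → Fin d → ℝ) :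
    (∑ i, c i * ∑ k ∈ σ, μ k * f k i) = ∑ k ∈ σ, μ k * ∑ i, c i * f k i := by
  simp_rw [Finset.mul_sum]
  rw [Finset.sum_comm]
  exact Finset.sum_congr rfl fun k _ => Finset.sum_congr rfl fun i _ => by ring

lemma aux1_swap1 (c : Fin d → ℝ) (σ : Finset (Fin n)) (f : Fin n → Fin d → ℝ) :
    (∑ i, c i * ∑ k ∈ σ, f k i) = ∑ k ∈ σ, ∑ i, c i * f k i := by
  simp_rw [Finset.mul_sum]
  rw [Finset.sum_comm]

lemma aux1_rep (A : Matrix (Fin d) (Fin n) ℤ) (σ : Finset (Fin n))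
    (hspan : Submodule.span ℝ (Set.range fun j : {j // j ∈ σ} => fun i => (A i j.1 : ℝ)) = ⊤)
    (j : Fin n) :
    ∃ g : Fin n → ℝ, ∀ i, (A i j : ℝ) = ∑ k ∈ σ, g k * (A i k : ℝ) := by
  classical
  have hx : (fun i => (A i j : ℝ)) ∈
      Submodule.span ℝ (Set.range fun j : {j // j ∈ σ} => fun i => (A i j.1 : ℝ)) := by
    rw [hspan]; trivial
  rw [Submodule.mem_span_range_iff_exists_fun] at hx
  obtain ⟨cc, hcc⟩ := hx
  refine ⟨fun k => if h : k ∈ σ then cc ⟨k, h⟩ else 0, fun i => ?_⟩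
  have h0 := congrFun hcc i
  simp only [Finset.sum_apply, Pi.smul_apply, smul_eq_mul] at h0
  rw [← h0]
  rw [← Finset.sum_attach σ (fun k => (if h : k ∈ σ then cc ⟨k, h⟩ else 0) * (A i k : ℝ))]
  rw [Finset.univ_eq_attach]
  exact Finset.sum_congr rfl fun k _ => by rw [dif_pos k.2]

lemma aux1_dual (A : Matrix (Fin d) (Fin n) ℤ) (σ : Finset (Fin n))
    (hind : LinearIndependent ℝ (fun j : {j // j ∈ σ} => fun i => (A i j.1 : ℝ)))
    (hspan : Submodule.span ℝ (Set.range fun j : {j // j ∈ σ} => fun i => (A i j.1 : ℝ)) = ⊤)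
    (y : Fin n → ℝ) :
    ∃ c : Fin d → ℝ, ∀ k ∈ σ, ∑ i, c i * (A i k : ℝ) = y k := by
  classical
  let b : Module.Basis {j // j ∈ σ} ℝ (Fin d → ℝ) := Module.Basis.mk hind (by rw [hspan])
  let φ : (Fin d → ℝ) →ₗ[ℝ] ℝ := b.constr ℝ (fun k => y k.1)
  refine ⟨fun i => φ (fun i' => if i = i' then 1 else 0), fun k hk => ?_⟩
  have hφ : ∀ x : Fin d → ℝ, ∑ i, φ (fun i' => if i = i' then 1 else 0) * x i = φ x := by
    intro x
    conv_rhs => rw [pi_eq_sum_univ x]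
    rw [map_sum]
    exact Finset.sum_congr rfl fun i _ => by rw [LinearMap.map_smul]; simp [mul_comm]
  rw [hφ]
  have hb : (fun i => (A i k : ℝ)) = b ⟨k, hk⟩ := by rw [Module.Basis.mk_apply]
  rw [hb]
  simp [φ, Module.Basis.constr_basis]

lemma aux1_uniq (A : Matrix (Fin d) (Fin n) ℤ) (σ : Finset (Fin n))
    (hind : LinearIndependent ℝ (fun j : {j // j ∈ σ} => fun i => (A i j.1 : ℝ)))
    {j : Fin n} (g g' : Fin n → ℝ)
    (hg : ∀ i, (A i j : ℝ) = ∑ k ∈ σ, g k * (A i k : ℝ))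
    (hg' : ∀ i, (A i j : ℝ) = ∑ k ∈ σ, g' k * (A i k : ℝ)) :
    ∀ k ∈ σ, g k = g' k := by
  classical
  have h0 : (∑ k : {j // j ∈ σ}, (g k.1 - g' k.1) • (fun i => (A i k.1 : ℝ))) = 0 := by
    funext i
    simp only [Finset.sum_apply, Pi.smul_apply, smul_eq_mul, Pi.zero_apply]
    rw [Finset.univ_eq_attach]
    rw [Finset.sum_attach σ (fun k => (g k - g' k) * (A i k : ℝ))]
    have : ∑ k ∈ σ, (g k - g' k) * (A i k : ℝ)
        = (∑ k ∈ σ, g k * (A i k : ℝ)) - ∑ k ∈ σ, g' k * (A i k : ℝ) := by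
      rw [← Finset.sum_sub_distrib]
      exact Finset.sum_congr rfl fun k _ => by ring
    rw [this, ← hg i, ← hg' i, sub_self]
  have := linearIndependent_iff'.mp hind Finset.univ (fun k => g k.1 - g' k.1) h0
  intro k hk
  have h2 := this ⟨k, hk⟩ (Finset.mem_univ _)
  simp only [] at h2
  linarith

lemma aux1_pair_eq (A : Matrix (Fin d) (Fin n) ℤ) (σ : Finset (Fin n)) (c w' : Fin n → ℝ)
    (c' : Fin d → ℝ) (hc : ∀ k ∈ σ, ∑ i, c' i * (A i k : ℝ) = w' k)
    {j : Fin n} (g : Fin n → ℝ)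
    (hg : ∀ i, (A i j : ℝ) = ∑ k ∈ σ, g k * (A i k : ℝ)) :
    ∑ i, c' i * (A i j : ℝ) = ∑ k ∈ σ, g k * w' k := by
  calc ∑ i, c' i * (A i j : ℝ) = ∑ i, c' i * ∑ k ∈ σ, g k * (A i k : ℝ) :=
        Finset.sum_congr rfl fun i _ => by rw [hg i]
    _ = ∑ k ∈ σ, g k * ∑ i, c' i * (A i k : ℝ) := aux1_swap _ _ _ _
    _ = ∑ k ∈ σ, g k * w' k := Finset.sum_congr rfl fun k hk => by rw [hc k hk]

lemma aux1_facet_of_wBpos (A : Matrix (Fin d) (Fin n) ℤ) (w' : Fin n → ℝ) (σ : Finset (Fin n))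
    (hind : LinearIndependent ℝ (fun j : {j // j ∈ σ} => fun i => (A i j.1 : ℝ)))
    (hspan : Submodule.span ℝ (Set.range fun j : {j // j ∈ σ} => fun i => (A i j.1 : ℝ)) = ⊤)
    (hpos : wBpos A w' σ) : isFacet A w' σ := by
  obtain ⟨c, hc⟩ := aux1_dual A σ hind hspan w'
  refine ⟨⟨c, hc, fun j hj => ?_⟩, hspan⟩
  obtain ⟨g, hg⟩ := aux1_rep A σ hspan j
  have h1 := aux1_pair_eq A σ w' w' c hc g hg
  have h2 := hpos j hj g hg
  linarith

lemma aux1_key (A : Matrix (Fin d) (Fin n) ℤ) (w : Fin n → ℝ)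
    (hw : isRegTriang A w) (w' : Fin n → ℝ) :
    (∀ τ : Finset (Fin n), isFacet A w' τ ↔ isFacet A w τ) ↔
      ∀ σ : Finset (Fin n), isFacet A w σ → wBpos A w' σ := by
  classical
  constructor
  · intro h σ hσ j hj g hg
    obtain ⟨⟨c, hceq, hclt⟩, -⟩ := (h σ).mpr hσ
    have h1 := aux1_pair_eq A σ w' w' c hceq g hg
    have h2 := hclt j hj
    linarith
  · intro h τ
    constructor
    · rintro ⟨⟨cτ, hτeq, hτlt⟩, hτspan⟩
      -- the point x = sum of columns of τ
      have hxmem : (fun i => ∑ j ∈ τ, (A i j : ℝ)) ∈ posCone A Finset.univ := by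
        refine ⟨fun j => if j ∈ τ then 1 else 0, fun j => by by_cases hj : j ∈ τ <;> simp [hj], ?_⟩
        funext i
        simp [ite_mul, Finset.sum_ite_mem]
      rw [hw.2] at hxmem
      simp only [Set.mem_iUnion, Set.mem_setOf_eq] at hxmem
      obtain ⟨σ, hσ, μ, hμ0, hxσ⟩ := hxmem
      obtain ⟨hcard, hind⟩ := hw.1 σ hσ
      obtain ⟨⟨cσ, hσeq, hσlt⟩, hσspan⟩ := aux1_facet_of_wBpos A w' σ hind hσ.2 (h σ hσ)
      have hxσ' : ∀ i, (∑ j ∈ τ, (A i j : ℝ)) = ∑ k ∈ σ, μ k * (A i k : ℝ) := by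
        intro i; exact congrFun hxσ i
      -- e1 : ⟨cτ, x⟩ = ∑_{j∈τ} w' j
      have e1 : (∑ i, cτ i * ∑ j ∈ τ, (A i j : ℝ)) = ∑ j ∈ τ, w' j := by
        rw [aux1_swap1]
        exact Finset.sum_congr rfl fun j hj => hτeq j hj
      -- e2 : ⟨cτ, x⟩ ≤ ∑ μ w'
      have e2 : (∑ i, cτ i * ∑ j ∈ τ, (A i j : ℝ)) ≤ ∑ k ∈ σ, μ k * w' k := by
        have : (∑ i, cτ i * ∑ j ∈ τ, (A i j : ℝ))
            = ∑ k ∈ σ, μ k * ∑ i, cτ i * (A i k : ℝ) := by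
          rw [show (∑ i, cτ i * ∑ j ∈ τ, (A i j : ℝ))
              = ∑ i, cτ i * ∑ k ∈ σ, μ k * (A i k : ℝ) from
            Finset.sum_congr rfl fun i _ => by rw [hxσ' i]]
          exact aux1_swap _ _ _ _
        rw [this]
        refine Finset.sum_le_sum fun k _ => mul_le_mul_of_nonneg_left ?_ (hμ0 k)
        by_cases hk : k ∈ τ
        · exact (hτeq k hk).le
        · exact (hτlt k hk).le
      -- e3 : ⟨cσ, x⟩ = ∑ μ w'
      have e3 : (∑ i, cσ i * ∑ j ∈ τ, (A i j : ℝ)) = ∑ k ∈ σ, μ k * w' k := by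
        rw [show (∑ i, cσ i * ∑ j ∈ τ, (A i j : ℝ))
            = ∑ i, cσ i * ∑ k ∈ σ, μ k * (A i k : ℝ) from
          Finset.sum_congr rfl fun i _ => by rw [hxσ' i]]
        rw [aux1_swap]
        exact Finset.sum_congr rfl fun k hk => by rw [hσeq k hk]
      -- e4 : ⟨cσ, x⟩ = ∑_{j∈τ} ⟨cσ, a_j⟩
      have e4 : (∑ i, cσ i * ∑ j ∈ τ, (A i j : ℝ))
          = ∑ j ∈ τ, ∑ i, cσ i * (A i j : ℝ) := aux1_swap1 _ _ _
      have tle : ∀ j ∈ τ, (∑ i, cσ i * (A i j : ℝ)) ≤ w' j := by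
        intro j hj
        by_cases hjσ : j ∈ σ
        · exact (hσeq j hjσ).le
        · exact (hσlt j hjσ).le
      have tsum : (∑ j ∈ τ, ∑ i, cσ i * (A i j : ℝ)) = ∑ j ∈ τ, w' j := by
        have h5 : (∑ j ∈ τ, ∑ i, cσ i * (A i j : ℝ)) ≤ ∑ j ∈ τ, w' j :=
          Finset.sum_le_sum tle
        linarith [e1, e2, e3, e4]
      have heq : ∀ j ∈ τ, (∑ i, cσ i * (A i j : ℝ)) = w' j :=
        (Finset.sum_eq_sum_iff_of_le tle).mp tsum
      have hsub : τ ⊆ σ := by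
        intro j hj
        by_contra hns
        exact absurd (heq j hj) (ne_of_lt (hσlt j hns))
      have hdle : d ≤ τ.card := by
        have h1 : Module.finrank ℝ
            ↥(Submodule.span ℝ (Set.range fun j : {j // j ∈ τ} => fun i => (A i j.1 : ℝ)))
            ≤ τ.card := by
          have := finrank_range_le_card (R := ℝ)
            (fun j : {j // j ∈ τ} => fun i => (A i j.1 : ℝ))
          simpa [Set.finrank, Fintype.card_coe] using this
        rw [hτspan, finrank_top] at h1
        simpa using h1
      have hτσ : τ = σ :=
        Finset.eq_of_subset_of_card_le hsub (by rw [hcard]; exact hdle)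
      exact hτσ ▸ hσ
    · intro hτ
      exact aux1_facet_of_wBpos A w' τ ((hw.1 τ hτ).2) hτ.2 (h τ hτ)

end auxx

theorem stmt_1 {d n : ℕ} (A : Matrix (Fin d) (Fin n) ℤ)
    (hrank : (A.map (Int.cast : ℤ → ℝ)).rank = d)
    (w : Fin n → ℝ) (hw : isRegTriang A w) :
    (∀ w' : Fin n → ℝ,
        (∀ τ : Finset (Fin n), isFacet A w' τ ↔ isFacet A w τ) ↔
          ∀ σ : Finset (Fin n), isFacet A w σ → wBpos A w' σ) ∧
      w ∈ cTw A w ∧ IsOpen (cTw A w) ∧ Convex ℝ (cTw A w) ∧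
      (∀ w₁ ∈ cTw A w, ∀ w₂ ∈ cTw A w, w₁ + w₂ ∈ cTw A w) ∧
      (∀ w' ∈ cTw A w, ∀ t : ℝ, 0 < t → t • w' ∈ cTw A w) := by
  classical
  have key := aux1_key A w hw
  have hchar : ∀ w'' : Fin n → ℝ, w'' ∈ cTw A w ↔
      ∀ σ : Finset (Fin n), isFacet A w σ → wBpos A w'' σ := fun w'' => key w''
  have hmemw : w ∈ cTw A w := fun τ => Iff.rfl
  have hadd : ∀ w₁ ∈ cTw A w, ∀ w₂ ∈ cTw A w, w₁ + w₂ ∈ cTw A w := by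
    intro w₁ h₁ w₂ h₂
    rw [hchar] at h₁ h₂ ⊢
    intro σ hσ j hj g hg
    have e₁ := h₁ σ hσ j hj g hg
    have e₂ := h₂ σ hσ j hj g hg
    have hs : (w₁ + w₂) j - ∑ k ∈ σ, g k * (w₁ + w₂) k
        = (w₁ j - ∑ k ∈ σ, g k * w₁ k) + (w₂ j - ∑ k ∈ σ, g k * w₂ k) := by
      simp only [Pi.add_apply, mul_add, Finset.sum_add_distrib]
      ring
    rw [hs]; linarith
  have hsmul : ∀ w' ∈ cTw A w, ∀ t : ℝ, 0 < t → t • w' ∈ cTw A w := by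
    intro w' h' t ht
    rw [hchar] at h' ⊢
    intro σ hσ j hj g hg
    have e := h' σ hσ j hj g hg
    have hsum : ∑ k ∈ σ, g k * (t • w') k = t * ∑ k ∈ σ, g k * w' k := by
      rw [Finset.mul_sum]
      exact Finset.sum_congr rfl fun k _ => by simp [Pi.smul_apply, smul_eq_mul]; ring
    have h3 := mul_pos ht e
    rw [mul_sub] at h3
    simp only [Pi.smul_apply, smul_eq_mul] at hsum ⊢
    rw [hsum]
    linarith
  have hconv : Convex ℝ (cTw A w) := by
    intro w₁ h₁ w₂ h₂ a b ha hb hab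
    rcases ha.eq_or_lt with ha0 | ha0
    · have hb1 : b = 1 := by linarith
      simp [← ha0, hb1]
      simpa using h₂
    · rcases hb.eq_or_lt with hb0 | hb0
      · have ha1 : a = 1 := by linarith
        simp [← hb0, ha1]
        simpa using h₁
      · exact hadd _ (hsmul w₁ h₁ a ha0) _ (hsmul w₂ h₂ b hb0)
  have hopen : IsOpen (cTw A w) := by
    have hset : cTw A w = ⋂ σ : Finset (Fin n), ⋂ j : Fin n,
        {w' : Fin n → ℝ | isFacet A w σ → j ∉ σ →
          ∀ g : Fin n → ℝ, (∀ i, (A i j : ℝ) = ∑ k ∈ σ, g k * (A i k : ℝ)) →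
            0 < w' j - ∑ k ∈ σ, g k * w' k} := by
      ext w'
      simp only [Set.mem_iInter, Set.mem_setOf_eq]
      rw [hchar]
      constructor
      · intro h σ j hσ hj g hg; exact h σ hσ j hj g hg
      · intro h σ hσ j hj g hg; exact h σ j hσ hj g hg
    rw [hset]
    refine isOpen_iInter_of_finite fun σ => isOpen_iInter_of_finite fun j => ?_
    by_cases hσj : isFacet A w σ ∧ j ∉ σ
    · obtain ⟨g₀, hg₀⟩ := aux1_rep A σ hσj.1.2 j
      have hind := (hw.1 σ hσj.1).2
      have hS : {w' : Fin n → ℝ | isFacet A w σ → j ∉ σ →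
          ∀ g : Fin n → ℝ, (∀ i, (A i j : ℝ) = ∑ k ∈ σ, g k * (A i k : ℝ)) →
            0 < w' j - ∑ k ∈ σ, g k * w' k}
          = {w' : Fin n → ℝ | 0 < w' j - ∑ k ∈ σ, g₀ k * w' k} := by
        ext w'
        simp only [Set.mem_setOf_eq]
        constructor
        · intro h; exact h hσj.1 hσj.2 g₀ hg₀
        · intro h _ _ g hg
          have huni := aux1_uniq A σ hind g g₀ hg hg₀
          have hsum : ∑ k ∈ σ, g k * w' k = ∑ k ∈ σ, g₀ k * w' k :=
            Finset.sum_congr rfl fun k hk => by rw [huni k hk]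
          linarith
      rw [hS]
      have hcont : Continuous fun w' : Fin n → ℝ => w' j - ∑ k ∈ σ, g₀ k * w' k :=
        (continuous_apply j).sub
          (continuous_finset_sum _ fun k _ => continuous_const.mul (continuous_apply k))
      exact isOpen_lt continuous_const hcont
    · have hS : {w' : Fin n → ℝ | isFacet A w σ → j ∉ σ →
          ∀ g : Fin n → ℝ, (∀ i, (A i j : ℝ) = ∑ k ∈ σ, g k * (A i k : ℝ)) →
            0 < w' j - ∑ k ∈ σ, g k * w' k} = Set.univ := by
        ext w'
        simp only [Set.mem_setOf_eq, Set.mem_univ, iff_true]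
        intro h1 h2
        exact absurd ⟨h1, h2⟩ hσj
      rw [hS]
      exact isOpen_univ
  exact ⟨key, hmemw, hopen, hconv, hadd, hsmul⟩
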